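/- Let p be prime, q = p^s, and M = [[a,b],[c,d]] ∈ GL_2(𝔽_q). Let f(x) = c x^{q+1} + d x^q - a x - b ∈ 𝔽_q[x]. If the image of M in PGL_2(𝔽_q) has order u, then f(x) divides x^{q^u} - x; in particular f splits into linear factors over 𝔽_{q^u}. -/

import Mathlib

open Polynomial Matrix

lemma center_GL_scalar {n R : Type*} [DecidableEq n] [Fintype n] [CommRing R] {M : GL n R}
    (h : M ∈ Subgroup.center (GL n R)) :
    ∃ r : R, Matrix.scalar n r = (M : Matrix n n R) := by
  refine Matrix.mem_range_scalar_of_commute_transvectionStruct ?_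
  intro t
  have hcomm := (Subgroup.mem_center_iff.mp h)
    ⟨t.toMatrix, t.inv.toMatrix, t.mul_inv, t.inv_mul⟩
  have := congrArg Units.val hcomm
  exact (by simpa [Units.val_mul] using this : t.toMatrix * (M : Matrix n n R) = (M : Matrix n n R) * t.toMatrix)

theorem stmt_3 (p s : ℕ) (hp : p.Prime) (hs : 1 ≤ s) (q : ℕ) (hq : q = p ^ s)
    (F : Type*) [Field F] [Fintype F] (hF : Fintype.card F = q)
    (M : GL (Fin 2) F) (a b c d : F)
    (ha : a = (M : Matrix (Fin 2) (Fin 2) F) 0 0) (hb : b = (M : Matrix (Fin 2) (Fin 2) F) 0 1)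
    (hc : c = (M : Matrix (Fin 2) (Fin 2) F) 1 0) (hd : d = (M : Matrix (Fin 2) (Fin 2) F) 1 1)
    (u : ℕ)
    (hu : u = orderOf (QuotientGroup.mk M :
      GL (Fin 2) F ⧸ Subgroup.center (GL (Fin 2) F))) :
    (C c * X ^ (q + 1) + C d * X ^ q - C a * X - C b : Polynomial F) ∣ X ^ q ^ u - X := by
  classical
  have hq2 : 2 ≤ q := by
    rw [hq]
    calc 2 ≤ p := hp.two_le
      _ ≤ p ^ s := Nat.le_self_pow (by omega) p
  -- characteristic
  have hcharF : CharP F p := by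
    have hchar : (ringChar F).Prime := CharP.char_is_prime F (ringChar F)
    obtain ⟨n, hn⟩ := FiniteField.card F (ringChar F)
    have hpd : p ∣ ringChar F := by
      have h1 : p ∣ ringChar F ^ (n : ℕ) := by
        rw [← hn.2, hF, hq]
        exact dvd_pow_self p (by omega)
      exact hp.dvd_of_dvd_pow h1
    have h2 : p = ringChar F := (Nat.prime_dvd_prime_iff_eq hp hchar).mp hpd
    rw [h2]; exact ringChar.charP F
  haveI := hcharF
  have hqF : ((q : ℕ) : F) = 0 := by rw [← hF]; exact FiniteField.cast_card_eq_zero F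
  -- determinant
  have hdet : a * d - b * c ≠ 0 := by
    have hunit : IsUnit ((M : Matrix (Fin 2) (Fin 2) F).det) :=
      (Matrix.isUnit_iff_isUnit_det _).mp M.isUnit
    rw [Matrix.det_fin_two] at hunit
    rw [ha, hb, hc, hd]
    exact hunit.ne_zero
  have hu1 : 1 ≤ u := by rw [hu]; exact orderOf_pos _
  set f : F[X] := C c * X ^ (q + 1) + C d * X ^ q - C a * X - C b with hfdef
  set g : F[X] := X ^ q ^ u - X with hgdef
  -- f ≠ 0
  have hf0 : f ≠ 0 := by
    intro h
    have h1 : f.coeff (q + 1) = 0 := by rw [h]; simp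
    have h2 : f.coeff q = 0 := by rw [h]; simp
    have e1 : ¬ (q + 1 = q) := by omega
    have e2 : ¬ (q + 1 = 1) := by omega
    have e3 : ¬ (q + 1 = 0) := by omega
    have e4 : ¬ (q = 1) := by omega
    have e5 : ¬ (q = 0) := by omega
    have e1b : ¬ (q = q + 1) := by omega
    have e2b : ¬ (1 = q + 1) := by omega
    have e3b : ¬ (0 = q + 1) := by omega
    have e4b : ¬ (1 = q) := by omega
    have e5b : ¬ (0 = q) := by omega
    rw [hfdef] at h1 h2
    simp [coeff_X, coeff_C, coeff_X_pow, e1, e2, e3, e4, e5, e1b, e2b, e3b, e4b, e5b] at h1 h2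
    rw [h1, h2] at hdet
    simp at hdet
  -- separable f
  have hder : derivative f = C c * X ^ q - C a := by rw [hfdef]; simp [hqF, derivative_X_pow]
  have hsep : f.Separable := by
    rw [Polynomial.separable_def, hder]
    refine ⟨C (a * d - b * c)⁻¹ * C c, -(C (a * d - b * c)⁻¹ * (C c * X + C d)), ?_⟩
    have key : C c * f - (C c * X + C d) * (C c * X ^ q - C a) = C (a * d - b * c) := by
      rw [hfdef, map_sub, _root_.map_mul, _root_.map_mul]; ring
    calc C (a * d - b * c)⁻¹ * C c * f
          + -(C (a * d - b * c)⁻¹ * (C c * X + C d)) * (C c * X ^ q - C a)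
        = C (a * d - b * c)⁻¹ * (C c * f - (C c * X + C d) * (C c * X ^ q - C a)) := by ring
      _ = C (a * d - b * c)⁻¹ * C (a * d - b * c) := by rw [key]
      _ = C ((a * d - b * c)⁻¹ * (a * d - b * c)) := by rw [← _root_.map_mul]
      _ = 1 := by rw [inv_mul_cancel₀ hdet, _root_.map_one]
  -- g ≠ 0 and separable
  have hqu2 : 2 ≤ q ^ u := le_trans hq2 (Nat.le_self_pow (by omega) q)
  have hg0 : g ≠ 0 := by
    intro h
    have h1 : g.coeff (q ^ u) = 0 := by rw [h]; simp
    have e1 : ¬ (q ^ u = 1) := by omega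
    have e1b : ¬ (1 = q ^ u) := by omega
    rw [hgdef] at h1
    simp [coeff_X_pow, coeff_X, e1, e1b] at h1
  have hquF : ((q ^ u : ℕ) : F) = 0 := by
    push_cast
    rw [hqF, zero_pow (by omega)]
  have hgder : derivative g = -1 := by rw [hgdef]; simp [hquF, derivative_X_pow, hqF, show u ≠ 0 by omega]
  have hgsep : g.Separable := by
    rw [Polynomial.separable_def, hgder]
    exact ⟨0, -1, by ring⟩
  -- pass to algebraic closure
  set K := AlgebraicClosure F with hK
  set ι : F →+* K := algebraMap F K with hι
  haveI : CharP K p := charP_of_injective_algebraMap (algebraMap F K).injective p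
  haveI : ExpChar K p := ExpChar.prime hp
  have ιfix : ∀ t : F, (ι t) ^ q = ι t := by
    intro t
    rw [← map_pow, ← hF, FiniteField.pow_card]
  have hfrob : ∀ x : K, ι c * x ^ (q + 1) + ι d * x ^ q - ι a * x - ι b = 0 →
      ι c * (x ^ q) ^ (q + 1) + ι d * (x ^ q) ^ q - ι a * (x ^ q) - ι b = 0 := by
    intro x hx
    have h1 := congrArg (iterateFrobenius K p s) hx
    simp only [_root_.map_add, _root_.map_sub, _root_.map_mul, _root_.map_pow, _root_.map_zero, iterateFrobenius_def] at h1
    rw [← hq] at h1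
    simpa [ιfix] using h1
  have hnv : ∀ x : K, ι c * x ^ (q + 1) + ι d * x ^ q - ι a * x - ι b = 0 →
      ι c * x + ι d ≠ 0 := by
    intro x hx h0
    have h1 : ι a * x + ι b = 0 := by
      have h2 : (ι c * x + ι d) * x ^ q - (ι a * x + ι b) = 0 := by
        linear_combination hx
      rw [h0] at h2
      linear_combination -h2
    have h2 : ι (a * d - b * c) = 0 := by
      rw [map_sub, _root_.map_mul, _root_.map_mul]
      linear_combination ι a * h0 - ι c * h1
    exact hdet (ι.injective (by rw [h2, map_zero]))
  -- the per-root statement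
  have main : ∀ x : K, ι c * x ^ (q + 1) + ι d * x ^ q - ι a * x - ι b = 0 →
      x ^ q ^ u = x := by
    intro x hx
    have hroots : ∀ k : ℕ, ι c * (x ^ q ^ k) ^ (q + 1) + ι d * (x ^ q ^ k) ^ q
        - ι a * (x ^ q ^ k) - ι b = 0 := by
      intro k
      induction k with
      | zero => simpa using hx
      | succ k ih =>
        have h1 := hfrob _ ih
        rw [pow_succ q k, pow_mul x (q ^ k) q]
        exact h1
    set N : Matrix (Fin 2) (Fin 2) K := ι.mapMatrix (M : Matrix (Fin 2) (Fin 2) F) with hN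
    have hN00 : N 0 0 = ι a := by rw [hN, ha]; rfl
    have hN01 : N 0 1 = ι b := by rw [hN, hb]; rfl
    have hN10 : N 1 0 = ι c := by rw [hN, hc]; rfl
    have hN11 : N 1 1 = ι d := by rw [hN, hd]; rfl
    have claim : ∀ k : ℕ, ∃ μ : K, μ ≠ 0 ∧
        (N ^ k) 0 0 * x + (N ^ k) 0 1 = μ * x ^ q ^ k ∧
        (N ^ k) 1 0 * x + (N ^ k) 1 1 = μ := by
      intro k
      induction k with
      | zero =>
        refine ⟨1, one_ne_zero, ?_, ?_⟩ <;> simp [Matrix.one_apply]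
      | succ k ih =>
        obtain ⟨μ, hμ, h1, h2⟩ := ih
        have hroot := hroots k
        have hnz : ι c * x ^ q ^ k + ι d ≠ 0 := hnv _ hroot
        have hrel : ι a * x ^ q ^ k + ι b = (ι c * x ^ q ^ k + ι d) * (x ^ q ^ k) ^ q := by
          linear_combination -hroot
        have e00 : (N ^ (k + 1)) 0 0 = ι a * (N ^ k) 0 0 + ι b * (N ^ k) 1 0 := by
          rw [pow_succ' N k, Matrix.mul_apply, Fin.sum_univ_two, hN00, hN01]
        have e01 : (N ^ (k + 1)) 0 1 = ι a * (N ^ k) 0 1 + ι b * (N ^ k) 1 1 := by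
          rw [pow_succ' N k, Matrix.mul_apply, Fin.sum_univ_two, hN00, hN01]
        have e10 : (N ^ (k + 1)) 1 0 = ι c * (N ^ k) 0 0 + ι d * (N ^ k) 1 0 := by
          rw [pow_succ' N k, Matrix.mul_apply, Fin.sum_univ_two, hN10, hN11]
        have e11 : (N ^ (k + 1)) 1 1 = ι c * (N ^ k) 0 1 + ι d * (N ^ k) 1 1 := by
          rw [pow_succ' N k, Matrix.mul_apply, Fin.sum_univ_two, hN10, hN11]
        have epow : x ^ q ^ (k + 1) = (x ^ q ^ k) ^ q := by
          rw [pow_succ q k, pow_mul x (q ^ k) q]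
        refine ⟨μ * (ι c * x ^ q ^ k + ι d), mul_ne_zero hμ hnz, ?_, ?_⟩
        · rw [e00, e01, epow]
          linear_combination ι a * h1 + ι b * h2 + μ * hrel
        · rw [e10, e11]
          linear_combination ι c * h1 + ι d * h2
    obtain ⟨μ, hμ, h1, h2⟩ := claim u
    -- M ^ u is central
    have hcen : (M ^ u) ∈ Subgroup.center (GL (Fin 2) F) := by
      rw [← QuotientGroup.eq_one_iff]
      have h3 : (QuotientGroup.mk (M ^ u) : GL (Fin 2) F ⧸ Subgroup.center (GL (Fin 2) F))
          = (QuotientGroup.mk M) ^ u := by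
        rw [← QuotientGroup.mk'_apply, map_pow, QuotientGroup.mk'_apply]
      rw [h3, hu]
      exact pow_orderOf_eq_one _
    obtain ⟨r, hr⟩ := center_GL_scalar hcen
    have hNu : N ^ u = ι.mapMatrix (Matrix.scalar (Fin 2) r) := by
      rw [hN, ← _root_.map_pow, ← Units.val_pow_eq_pow_val, ← hr]
    have hs00 : (ι.mapMatrix (Matrix.scalar (Fin 2) r)) 0 0 = ι r := by
      simp [Matrix.scalar_apply]
    have hs01 : (ι.mapMatrix (Matrix.scalar (Fin 2) r)) 0 1 = 0 := by
      simp [Matrix.scalar_apply, Matrix.diagonal_apply_ne]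
    have hs10 : (ι.mapMatrix (Matrix.scalar (Fin 2) r)) 1 0 = 0 := by
      simp [Matrix.scalar_apply, Matrix.diagonal_apply_ne]
    have hs11 : (ι.mapMatrix (Matrix.scalar (Fin 2) r)) 1 1 = ι r := by
      simp [Matrix.scalar_apply]
    rw [hNu, hs00, hs01] at h1
    rw [hNu, hs10, hs11] at h2
    simp only [zero_mul, zero_add, add_zero] at h1 h2
    -- h2 : ι r = μ, h1 : ι r * x = μ * x ^ q ^ u
    rw [← h2] at h1 hμ
    exact (mul_left_cancel₀ hμ h1.symm)
  -- conclude divisibility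
  rw [← map_dvd_map' ι]
  refine Polynomial.Splits.dvd_of_roots_le_roots (IsAlgClosed.splits _)
    (Polynomial.map_ne_zero hf0) ?_
  rw [Multiset.le_iff_count]
  intro α
  by_cases hα : α ∈ (f.map ι).roots
  · have hcount : (f.map ι).roots.count α = 1 :=
      Multiset.count_eq_one_of_mem (nodup_roots (hsep.map (f := ι))) hα
    have hmem : α ∈ (g.map ι).roots := by
      rw [mem_roots'] at hα ⊢
      refine ⟨Polynomial.map_ne_zero hg0, ?_⟩
      have hroot : eval α (f.map ι) = 0 := hα.2
      have heq : ι c * α ^ (q + 1) + ι d * α ^ q - ι a * α - ι b = 0 := by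
        rw [hfdef] at hroot
        simp only [Polynomial.map_add, Polynomial.map_sub, Polynomial.map_mul,
          Polynomial.map_pow, Polynomial.map_C, Polynomial.map_X, eval_add, eval_sub,
          eval_mul, eval_pow, eval_C, eval_X] at hroot
        exact hroot
      have hxu := main α heq
      rw [hgdef]
      simp only [Polynomial.map_sub, Polynomial.map_pow, Polynomial.map_X, IsRoot,
        eval_sub, eval_pow, eval_X]
      rw [hxu, sub_self]
    rw [hcount]
    exact Multiset.one_le_count_iff_mem.mpr hmem
  · rw [Multiset.count_eq_zero_of_notMem hα]
    exact Nat.zero_le _
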